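/- Let a, α, x, t₀ ∈ ℝ, c ∈ ℂ, and k ∈ ℤ. Set B(x) = diag(e^{−iπkx}, e^{iπkx}), A = diag(e^{2πia}, e^{−2πia}), and let F(x) be the 2×2 matrix [[2πi t₀, c e^{2πikx}], [−conj(c) e^{−2πikx}, −2πi t₀]] ∈ su(2). Then B(x+α) · A · exp(F(x)) · B(x)⁻¹ = diag(e^{2πi(a − kα/2)}, e^{−2πi(a − kα/2)}) · exp([[2πi t₀, c], [−conj(c), −2πi t₀]]), where exp denotes the matrix exponential. In particular, the left-hand side is a constant (x-independent) element of SU(2). -/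

import Mathlib

open Matrix

theorem hFlem (x : ℝ) (t₀ : ℝ) (c : ℂ) (k : ℤ) :
    (!![2 * Real.pi * Complex.I * t₀,
          c * Complex.exp (2 * Real.pi * Complex.I * k * x);
        -(starRingEnd ℂ c) * Complex.exp (-(2 * Real.pi * Complex.I * k * x)),
          -(2 * Real.pi * Complex.I * t₀)]) =
    !![Complex.exp (Real.pi * Complex.I * k * x), 0;
       0, Complex.exp (-(Real.pi * Complex.I * k * x))] *
      (!![2 * Real.pi * Complex.I * t₀, c;
          -(starRingEnd ℂ c), -(2 * Real.pi * Complex.I * t₀)]) *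
    !![Complex.exp (-(Real.pi * Complex.I * k * x)), 0;
       0, Complex.exp (Real.pi * Complex.I * k * x)] := by
  have h : ∀ (v w m : ℂ), Complex.exp v * m * Complex.exp w = Complex.exp (v + w) * m := by
    intro v w m; rw [mul_right_comm, ← Complex.exp_add]
  rw [Matrix.mul_fin_two, Matrix.mul_fin_two]
  simp only [mul_zero, zero_mul, add_zero, zero_add]
  rw [h, h, h, h,
    show (Real.pi:ℂ) * Complex.I * k * x + -(Real.pi * Complex.I * k * x) = 0 by ring,
    show -((Real.pi:ℂ) * Complex.I * k * x) + Real.pi * Complex.I * k * x = 0 by ring,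
    show (Real.pi:ℂ) * Complex.I * k * x + Real.pi * Complex.I * k * x
        = 2 * Real.pi * Complex.I * k * x by ring,
    show -((Real.pi:ℂ) * Complex.I * k * x) + -(Real.pi * Complex.I * k * x)
        = -(2 * Real.pi * Complex.I * k * x) by ring,
    Complex.exp_zero, one_mul, one_mul, mul_comm c, mul_comm (-(starRingEnd ℂ c))]

theorem stmt13 (a α x t₀ : ℝ) (c : ℂ) (k : ℤ) :
    (!![Complex.exp (-(Real.pi * Complex.I * k * (x + α))), 0;
        0, Complex.exp (Real.pi * Complex.I * k * (x + α))]) *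
        (!![Complex.exp (2 * Real.pi * Complex.I * a), 0;
            0, Complex.exp (-(2 * Real.pi * Complex.I * a))]) *
        NormedSpace.exp
          (!![2 * Real.pi * Complex.I * t₀,
                c * Complex.exp (2 * Real.pi * Complex.I * k * x);
              -(starRingEnd ℂ c) * Complex.exp (-(2 * Real.pi * Complex.I * k * x)),
                -(2 * Real.pi * Complex.I * t₀)]) *
        (!![Complex.exp (-(Real.pi * Complex.I * k * x)), 0;
            0, Complex.exp (Real.pi * Complex.I * k * x)])⁻¹ =
      (!![Complex.exp (2 * Real.pi * Complex.I * (a - k * α / 2)), 0;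
          0, Complex.exp (-(2 * Real.pi * Complex.I * (a - k * α / 2)))]) *
        NormedSpace.exp
          (!![2 * Real.pi * Complex.I * t₀, c;
              -(starRingEnd ℂ c), -(2 * Real.pi * Complex.I * t₀)]) := by
  set B : Matrix (Fin 2) (Fin 2) ℂ :=
    !![Complex.exp (-(Real.pi * Complex.I * k * x)), 0;
       0, Complex.exp (Real.pi * Complex.I * k * x)] with hB
  set V : Matrix (Fin 2) (Fin 2) ℂ :=
    !![Complex.exp (Real.pi * Complex.I * k * x), 0;
       0, Complex.exp (-(Real.pi * Complex.I * k * x))] with hV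
  have hBV : B * V = 1 := by
    rw [hB, hV, Matrix.mul_fin_two]
    simp [← Complex.exp_add, Matrix.one_fin_two]
  have hVB : V * B = 1 := by
    rw [hB, hV, Matrix.mul_fin_two]
    simp [← Complex.exp_add, Matrix.one_fin_two]
  have hBinv : B⁻¹ = V := Matrix.inv_eq_right_inv hBV
  have hVinv : V⁻¹ = B := Matrix.inv_eq_right_inv hVB
  have hVunit : IsUnit V := ⟨⟨V, B, hVB, hBV⟩, rfl⟩
  have hF : (!![2 * Real.pi * Complex.I * t₀,
                c * Complex.exp (2 * Real.pi * Complex.I * k * x);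
              -(starRingEnd ℂ c) * Complex.exp (-(2 * Real.pi * Complex.I * k * x)),
                -(2 * Real.pi * Complex.I * t₀)]) =
      V * (!![2 * Real.pi * Complex.I * t₀, c;
              -(starRingEnd ℂ c), -(2 * Real.pi * Complex.I * t₀)]) * V⁻¹ := by
    rw [hVinv]; exact hFlem x t₀ c k
  rw [hF, Matrix.exp_conj _ _ hVunit, hBinv]
  rw [mul_assoc _ (V * NormedSpace.exp _ * V⁻¹) V, hVinv,
    mul_assoc (V * NormedSpace.exp _) B V, hBV, mul_one, ← mul_assoc]
  congr 1
  rw [hV, Matrix.mul_fin_two, Matrix.mul_fin_two]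
  simp only [mul_zero, zero_mul, add_zero, zero_add]
  rw [← Complex.exp_add, ← Complex.exp_add, ← Complex.exp_add, ← Complex.exp_add]
  congr 2 <;> ring
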